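/- Let I be a nonempty finite index set, and for each k ∈ I let a_k > 0, c_k > 0 and d_k ≥ 0 be reals. Let S be a real with S > Σ_{k∈I} d_k/c_k. Define μ = (S − Σ_{j∈I} d_j/c_j) / (Σ_{j∈I} a_j^{3/4} c_j^{−1/4}) and p*_k = d_k/c_k + a_k^{3/4} c_k^{−1/4} μ. Then: (i) Σ_{k∈I} p*_k = S and c_k p*_k − d_k > 0 for all k; and (ii) for every family (p_k)_{k∈I} of reals with Σ_{k∈I} p_k ≤ S and c_k p_k − d_k > 0 for all k, one has Σ_{k∈I} a_k (c_k p*_k − d_k)^{−1/3} ≤ Σ_{k∈I} a_k (c_k p_k − d_k)^{−1/3}. -/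

import Mathlib

open Finset

private lemma tangent_aux (t y : ℝ) (ht : 0 < t) (hy : 0 < y) :
    (4/3) * y ^ (-(1:ℝ)/3) ≤ t ^ (-(1:ℝ)/3) + (1/3) * y ^ (-(4:ℝ)/3) * t := by
  set u : ℝ := t / y with hu
  have hu0 : 0 < u := div_pos ht hy
  set v : ℝ := u ^ ((1:ℝ)/3) with hv
  have hv0 : 0 < v := Real.rpow_pos_of_pos hu0 _
  have hv3 : v ^ (3:ℕ) = u := by
    rw [hv, ← Real.rpow_natCast (u ^ ((1:ℝ)/3)) 3, ← Real.rpow_mul hu0.le]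
    norm_num
  have hty : t = u * y := by rw [hu, div_mul_cancel₀ t hy.ne']
  have h1 : t ^ (-(1:ℝ)/3) = v⁻¹ * y ^ (-(1:ℝ)/3) := by
    rw [hty, Real.mul_rpow hu0.le hy.le]
    congr 1
    rw [hv, ← Real.rpow_neg_one (u ^ ((1:ℝ)/3)), ← Real.rpow_mul hu0.le]
    norm_num
  have h2 : y ^ (-(4:ℝ)/3) * t = v ^ (3:ℕ) * y ^ (-(1:ℝ)/3) := by
    rw [hty, hv3]
    rw [show y ^ (-(4:ℝ)/3) * (u * y) = u * (y ^ (-(4:ℝ)/3) * y ^ (1:ℝ)) by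
      rw [Real.rpow_one]; ring]
    rw [← Real.rpow_add hy]
    norm_num
  rw [h1, mul_assoc, h2]
  have hA : (0:ℝ) < y ^ (-(1:ℝ)/3) := Real.rpow_pos_of_pos hy _
  have key : (4:ℝ)/3 ≤ v⁻¹ + (1/3) * v^(3:ℕ) := by
    have h3 : v⁻¹ = 1/v := by field_simp
    rw [h3, div_add' _ _ _ (ne_of_gt hv0)]
    rw [div_le_div_iff₀ (by norm_num) hv0]
    nlinarith [sq_nonneg (v-1), sq_nonneg (v+1), sq_nonneg v, hv0]
  calc (4:ℝ)/3 * y ^ (-(1:ℝ)/3) ≤ (v⁻¹ + (1/3)*v^(3:ℕ)) * y ^ (-(1:ℝ)/3) :=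
        mul_le_mul_of_nonneg_right key hA.le
    _ = v⁻¹ * y ^ (-(1:ℝ)/3) + 1/3 * (v^(3:ℕ) * y ^ (-(1:ℝ)/3)) := by ring

/-- **Optimal power control for server-WPT** (problem P3 and equation (53) of the paper).
With `μ = (S − Σ_j d_j/c_j)/(Σ_j a_j^{3/4} c_j^{−1/4})` and
`p*_k = d_k/c_k + a_k^{3/4} c_k^{−1/4} μ`: the allocation `p*` exhausts the power budget, keeps
every `c_k p*_k − d_k` positive, and minimizes `Σ_k a_k (c_k p_k − d_k)^{−1/3}` over all feasible
allocations. -/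
theorem optimal_power_control
    {ι : Type*} (I : Finset ι) (hI : I.Nonempty)
    (a c d : ι → ℝ)
    (ha : ∀ k ∈ I, 0 < a k) (hc : ∀ k ∈ I, 0 < c k) (hd : ∀ k ∈ I, 0 ≤ d k)
    (S : ℝ) (hS : ∑ k ∈ I, d k / c k < S)
    (μ : ℝ) (hμ : μ = (S - ∑ j ∈ I, d j / c j) /
      (∑ j ∈ I, (a j) ^ ((3 : ℝ) / 4) * (c j) ^ (-(1 : ℝ) / 4)))
    (pstar : ι → ℝ)
    (hp : ∀ k ∈ I, pstar k = d k / c k + (a k) ^ ((3 : ℝ) / 4) * (c k) ^ (-(1 : ℝ) / 4) * μ) :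
    ((∑ k ∈ I, pstar k = S) ∧ ∀ k ∈ I, 0 < c k * pstar k - d k) ∧
      ∀ p : ι → ℝ, (∑ k ∈ I, p k ≤ S) → (∀ k ∈ I, 0 < c k * p k - d k) →
        ∑ k ∈ I, a k * (c k * pstar k - d k) ^ (-(1 : ℝ) / 3) ≤
          ∑ k ∈ I, a k * (c k * p k - d k) ^ (-(1 : ℝ) / 3) := by
  set B : ℝ := S - ∑ j ∈ I, d j / c j with hB
  have hB0 : 0 < B := by simp [hB]; linarith
  set D : ℝ := ∑ j ∈ I, (a j) ^ ((3 : ℝ) / 4) * (c j) ^ (-(1 : ℝ) / 4) with hD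
  have hD0 : 0 < D := by
    apply Finset.sum_pos _ hI
    intro j hj
    exact mul_pos (Real.rpow_pos_of_pos (ha j hj) _) (Real.rpow_pos_of_pos (hc j hj) _)
  have hμ0 : 0 < μ := by rw [hμ]; exact div_pos hB0 hD0
  -- y k := c k * pstar k - d k = a^{3/4} c^{3/4} μ
  have hy : ∀ k ∈ I, c k * pstar k - d k =
      (a k) ^ ((3:ℝ)/4) * (c k) ^ ((3:ℝ)/4) * μ := by
    intro k hk
    have hck := hc k hk
    rw [hp k hk]
    have : c k * (d k / c k) = d k := by field_simp
    have hcc : c k * (c k) ^ (-(1:ℝ)/4) = (c k) ^ ((3:ℝ)/4) := by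
      rw [show c k * (c k) ^ (-(1:ℝ)/4) = (c k) ^ (1:ℝ) * (c k) ^ (-(1:ℝ)/4) by
        rw [Real.rpow_one], ← Real.rpow_add hck]
      norm_num
    calc c k * (d k / c k + (a k) ^ ((3:ℝ)/4) * (c k) ^ (-(1:ℝ)/4) * μ) - d k
        = (a k) ^ ((3:ℝ)/4) * (c k * (c k) ^ (-(1:ℝ)/4)) * μ := by
          rw [mul_add, this]; ring
      _ = (a k) ^ ((3:ℝ)/4) * (c k) ^ ((3:ℝ)/4) * μ := by rw [hcc]
  have hypos : ∀ k ∈ I, 0 < c k * pstar k - d k := by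
    intro k hk
    rw [hy k hk]
    exact mul_pos (mul_pos (Real.rpow_pos_of_pos (ha k hk) _)
      (Real.rpow_pos_of_pos (hc k hk) _)) hμ0
  have hsum : ∑ k ∈ I, pstar k = S := by
    have : ∑ k ∈ I, pstar k =
        ∑ k ∈ I, (d k / c k + (a k) ^ ((3:ℝ)/4) * (c k) ^ (-(1:ℝ)/4) * μ) :=
      Finset.sum_congr rfl hp
    rw [this, Finset.sum_add_distrib, ← Finset.sum_mul, ← hD, hμ]
    field_simp
    rw [hB]; ring
  refine ⟨⟨hsum, hypos⟩, ?_⟩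
  intro p hpS hpfeas
  set L : ℝ := μ ^ (-(4:ℝ)/3) with hL
  have hL0 : 0 < L := Real.rpow_pos_of_pos hμ0 _
  -- key identity: a k * (y k)^{-4/3} = L / c k
  have hkey : ∀ k ∈ I, a k * (c k * pstar k - d k) ^ (-(4:ℝ)/3) = L / c k := by
    intro k hk
    have hak := ha k hk; have hck := hc k hk
    rw [hy k hk, Real.mul_rpow (by positivity) hμ0.le,
      Real.mul_rpow (Real.rpow_nonneg hak.le _) (Real.rpow_nonneg hck.le _),
      ← Real.rpow_mul hak.le, ← Real.rpow_mul hck.le]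
    norm_num
    have hLμ : μ ^ (-((4:ℝ)/3)) = L := by rw [hL]; norm_num
    rw [hLμ, Real.rpow_neg_one, Real.rpow_neg_one]
    field_simp
  -- per-k inequality
  have hper : ∀ k ∈ I,
      a k * (c k * pstar k - d k) ^ (-(1:ℝ)/3) + (L/3) * ((c k * pstar k - d k) / c k) ≤
      a k * (c k * p k - d k) ^ (-(1:ℝ)/3) + (L/3) * ((c k * p k - d k) / c k) := by
    intro k hk
    have hak := ha k hk; have hck := hc k hk
    have hxk := hpfeas k hk
    have hyk := hypos k hk
    have htan := tangent_aux (c k * p k - d k) (c k * pstar k - d k) hxk hyk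
    -- multiply by a k
    have h1 : a k * ((4/3) * (c k * pstar k - d k) ^ (-(1:ℝ)/3)) ≤
        a k * ((c k * p k - d k) ^ (-(1:ℝ)/3) +
          (1/3) * (c k * pstar k - d k) ^ (-(4:ℝ)/3) * (c k * p k - d k)) :=
      mul_le_mul_of_nonneg_left htan hak.le
    have hkk := hkey k hk
    -- LHS: (4/3) a y^{-1/3} = a y^{-1/3} + (1/3) a y^{-4/3} y
    have hyy : (c k * pstar k - d k) ^ (-(4:ℝ)/3) * (c k * pstar k - d k) =
        (c k * pstar k - d k) ^ (-(1:ℝ)/3) := by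
      nth_rewrite 2 [show (c k * pstar k - d k) = (c k * pstar k - d k) ^ (1:ℝ) by
        rw [Real.rpow_one]]
      rw [← Real.rpow_add hyk]
      norm_num
    have e1 : a k * ((4/3) * (c k * pstar k - d k) ^ (-(1:ℝ)/3)) =
        a k * (c k * pstar k - d k) ^ (-(1:ℝ)/3) +
        (L/3) * ((c k * pstar k - d k) / c k) := by
      linear_combination ((c k * pstar k - d k)/3) * hkk - (a k/3) * hyy
    have e2 : a k * ((c k * p k - d k) ^ (-(1:ℝ)/3) +
          (1/3) * (c k * pstar k - d k) ^ (-(4:ℝ)/3) * (c k * p k - d k)) =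
        a k * (c k * p k - d k) ^ (-(1:ℝ)/3) + (L/3) * ((c k * p k - d k) / c k) := by
      linear_combination ((c k * p k - d k)/3) * hkk
    rw [e1, e2] at h1
    exact h1
  -- sums of (y/c) vs (x/c)
  have hsc : ∑ k ∈ I, (c k * p k - d k) / c k ≤ ∑ k ∈ I, (c k * pstar k - d k) / c k := by
    have e : ∀ q : ι → ℝ, ∑ k ∈ I, (c k * q k - d k) / c k =
        ∑ k ∈ I, q k - ∑ k ∈ I, d k / c k := by
      intro q
      rw [← Finset.sum_sub_distrib]
      apply Finset.sum_congr rfl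
      intro k hk
      have := (hc k hk).ne'
      field_simp
    rw [e p, e pstar, hsum]
    linarith
  have hstot := Finset.sum_le_sum hper
  rw [Finset.sum_add_distrib, Finset.sum_add_distrib, ← Finset.mul_sum, ← Finset.mul_sum] at hstot
  linarith [mul_le_mul_of_nonneg_left hsc (by positivity : (0:ℝ) ≤ L/3)]
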